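/- If f is analytic on D(0,R₁) with Taylor coefficients a_k and g is analytic on D(0,R₂) with Taylor coefficients b_k, then the Hadamard product series Σ a_k b_k z^k converges and defines an analytic function on D(0, R₁R₂). -/

import Mathlib

open Metric Set Filter

noncomputable def coeff (f : ℂ → ℂ) (k : ℕ) : ℂ := iteratedDeriv k f 0 / (k.factorial : ℂ)

noncomputable def hadamard (f g : ℂ → ℂ) : ℂ → ℂ := fun z => ∑' k : ℕ, coeff f k * coeff g k * z ^ k

def Pt (x : ℂ) (f : ℂ → ℂ) : ℂ → ℂ := fun z => f (x * z)

def A0 : Set (ℂ → ℂ) := {f | AnalyticOnNhd ℂ f (ball (0:ℂ) 1) ∧ f 0 = 1}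

def cm (V : Set (ℂ → ℂ)) : Set (ℂ → ℂ) := {h | ∃ f ∈ V, ∃ x : ℂ, ‖x‖ ≤ 1 ∧ h = Pt x f}

def dual (V : Set (ℂ → ℂ)) : Set (ℂ → ℂ) :=
  {g ∈ A0 | ∀ f ∈ V, ∀ z ∈ ball (0:ℂ) 1, hadamard f g z ≠ 0}

def eligible (g : ℂ → ℂ) : Prop := ∃ R > 1, AnalyticOnNhd ℂ g (ball (0:ℂ) R)

def VT (V : Set (ℂ → ℂ)) : Set (ℂ → ℂ) :=
  {g | eligible g ∧ g 0 = 1 ∧ ∀ f ∈ V, hadamard f g 1 ≠ 0}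

def perp (U : Set (ℂ → ℂ)) : Set (ℂ → ℂ) :=
  {h ∈ A0 | ∀ g ∈ U, hadamard g h 1 ≠ 0}

def lamSet (g : ℂ → ℂ) (V : Set (ℂ → ℂ)) : Set ℂ := (fun f => hadamard f g 1) '' V

def S (R : ℝ) : Set (Set ℂ) := {K | K ⊆ ball (0:ℂ) R ∧ IsCompact K}

noncomputable def closLU (R : ℝ) (U : Set (ℂ → ℂ)) : Set (ℂ → ℂ) :=
  (UniformOnFun.toFun (S R)) '' closure ((UniformOnFun.ofFun (S R)) '' U)

lemma coeff_bound {f : ℂ → ℂ} {R r : ℝ} (hf : AnalyticOnNhd ℂ f (ball (0:ℂ) R))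
    (hr0 : 0 < r) (hrR : r < R) : ∃ C : ℝ, 0 ≤ C ∧ ∀ k, ‖coeff f k‖ * r ^ k ≤ C := by
  have hz : (r : ℂ) ∈ ball (0:ℂ) R := by
    simp [Complex.norm_real, abs_of_pos hr0, hrR]
  have hs := Complex.hasSum_taylorSeries_on_ball
    (hf.differentiableOn (f := f)) hz
  have hsum : Summable fun n : ℕ => ‖(n.factorial : ℂ)⁻¹ • ((r:ℂ) - 0) ^ n • iteratedDeriv n f 0‖ :=
    (summable_norm_iff.mpr hs.summable)
  refine ⟨∑' n, ‖(n.factorial : ℂ)⁻¹ • ((r:ℂ) - 0) ^ n • iteratedDeriv n f 0‖,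
    tsum_nonneg (fun n => norm_nonneg _), fun k => ?_⟩
  have hle := hsum.le_tsum k (fun _ _ => norm_nonneg _)
  refine le_trans (le_of_eq ?_) hle
  simp only [sub_zero, smul_eq_mul, norm_mul, norm_inv, norm_pow, Complex.norm_natCast,
    Complex.norm_real, Real.norm_eq_abs, abs_of_pos hr0]
  rw [coeff, norm_div, Complex.norm_natCast, div_eq_inv_mul]
  ring

lemma radius_ge {f g : ℂ → ℂ} {R₁ R₂ : ℝ} (hR₁ : 0 < R₁) (hR₂ : 0 < R₂)
    (hf : AnalyticOnNhd ℂ f (ball (0:ℂ) R₁)) (hg : AnalyticOnNhd ℂ g (ball (0:ℂ) R₂)) :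
    ENNReal.ofReal (R₁ * R₂) ≤
      (FormalMultilinearSeries.ofScalars ℂ (fun k => coeff f k * coeff g k)).radius := by
  refine ENNReal.le_of_forall_nnreal_lt (fun r hr => ?_)
  have hrlt : (r : ℝ) < R₁ * R₂ := by
    have := (ENNReal.lt_ofReal_iff_toReal_lt (by simp)).mp hr
    simpa using this
  have hRR : 0 < R₁ * R₂ := mul_pos hR₁ hR₂
  set u : ℝ := (r : ℝ) / (R₁ * R₂) with hu
  have hu0 : 0 ≤ u := div_nonneg r.coe_nonneg hRR.le
  have hu1 : u < 1 := (div_lt_one hRR).mpr hrlt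
  set s : ℝ := (u + 1) / 2 with hs
  have hs0 : 0 < s := by positivity
  have hs1 : s < 1 := by simp only [hs]; linarith
  have hus : u < s ^ 2 := by
    have hne : u - 1 < 0 := by linarith
    have hpos : (0:ℝ) < (u - 1) * (u - 1) := mul_pos_of_neg_of_neg hne hne
    simp only [hs]
    nlinarith
  obtain ⟨C₁, hC₁0, hC₁⟩ := coeff_bound hf (mul_pos hR₁ hs0) (by nlinarith)
  obtain ⟨C₂, hC₂0, hC₂⟩ := coeff_bound hg (mul_pos hR₂ hs0) (by nlinarith)
  apply FormalMultilinearSeries.le_radius_of_bound _ (C₁ * C₂)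
  intro n
  rw [FormalMultilinearSeries.ofScalars_norm]
  have hrle : (r : ℝ) ≤ (R₁ * s) * (R₂ * s) := by
    have : (r : ℝ) = u * (R₁ * R₂) := by rw [hu, div_mul_cancel₀ _ hRR.ne']
    nlinarith
  calc ‖coeff f n * coeff g n‖ * (r : ℝ) ^ n
      ≤ ‖coeff f n * coeff g n‖ * ((R₁ * s) * (R₂ * s)) ^ n := by
        gcongr
    _ = (‖coeff f n‖ * (R₁ * s) ^ n) * (‖coeff g n‖ * (R₂ * s) ^ n) := by
        rw [norm_mul, mul_pow]; ring
    _ ≤ C₁ * C₂ := mul_le_mul (hC₁ n) (hC₂ n) (by positivity) hC₁0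

theorem stmt1 (R₁ R₂ : ℝ) (hR₁ : 0 < R₁) (hR₂ : 0 < R₂)
    (f g : ℂ → ℂ)
    (hf : AnalyticOnNhd ℂ f (ball (0:ℂ) R₁))
    (hg : AnalyticOnNhd ℂ g (ball (0:ℂ) R₂)) :
    (∀ z ∈ ball (0:ℂ) (R₁ * R₂), Summable (fun k : ℕ => coeff f k * coeff g k * z ^ k)) ∧
      AnalyticOnNhd ℂ (hadamard f g) (ball (0:ℂ) (R₁ * R₂)) := by
  set c : ℕ → ℂ := fun k => coeff f k * coeff g k with hc
  set q := FormalMultilinearSeries.ofScalars ℂ c with hq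
  have hrad : ENNReal.ofReal (R₁ * R₂) ≤ q.radius := radius_ge hR₁ hR₂ hf hg
  have hmem : ∀ z ∈ ball (0:ℂ) (R₁ * R₂), z ∈ EMetric.ball (0:ℂ) q.radius := by
    intro z hz
    rw [EMetric.ball, EMetric.mem_ball, edist_zero_right]
    refine lt_of_lt_of_le ?_ hrad
    rw [← ofReal_norm]
    exact (ENNReal.ofReal_lt_ofReal_iff (mul_pos hR₁ hR₂)).mpr (mem_ball_zero_iff.mp hz)
  have happ : ∀ (n : ℕ) (z : ℂ), (q n fun _ => z) = c n * z ^ n := by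
    intro n z
    rw [hq, FormalMultilinearSeries.ofScalars_apply_eq, smul_eq_mul]
  constructor
  · intro z hz
    have := q.hasSum (hmem z hz)
    exact Summable.congr this.summable (fun n => happ n z)
  · have heq : hadamard f g = q.sum := by
      funext z
      simp only [hadamard, FormalMultilinearSeries.sum]
      exact tsum_congr (fun n => (happ n z).symm)
    rw [heq]
    intro z hz
    have hpos : 0 < q.radius := lt_of_lt_of_le (by simp [ENNReal.ofReal_pos, mul_pos hR₁ hR₂]) hrad
    exact (q.hasFPowerSeriesOnBall hpos).analyticAt_of_mem (by simpa [EMetric.ball] using hmem z hz)
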